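/- With the parallel bases μ·b∥ᵢ = δᵢ·a∥ᵢ (i = 1,2), the vectors d∥ᵢ = (gcd(μ,δᵢ)/δᵢ)·b∥ᵢ = (gcd(μ,δᵢ)/μ)·a∥ᵢ form a basis of the sum lattice 𝒟 = 𝒜 + ℬ. -/

import Mathlib

def latt (M : Matrix (Fin 2) (Fin 2) ℝ) : Set (Fin 2 → ℝ) :=
  {v | ∃ z : Fin 2 → ℤ, v = M.mulVec (fun i => (z i : ℝ))}

lemma latt_mul_subset (M : Matrix (Fin 2) (Fin 2) ℝ) (W : Matrix (Fin 2) (Fin 2) ℤ) :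
    latt (M * W.map (Int.cast : ℤ → ℝ)) ⊆ latt M := by
  rintro x ⟨z, rfl⟩
  refine ⟨W.mulVec z, ?_⟩
  funext j
  rw [← Matrix.mulVec_mulVec]
  congr 1
  funext i
  have := (RingHom.map_mulVec (Int.castRingHom ℝ) W z i).symm
  simpa [Function.comp] using this

lemma latt_mul_unimodular (M : Matrix (Fin 2) (Fin 2) ℝ) (W : Matrix (Fin 2) (Fin 2) ℤ)
    (hW : IsUnit W.det) : latt (M * W.map (Int.cast : ℤ → ℝ)) = latt M := by
  refine le_antisymm (latt_mul_subset M W) ?_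
  have h := latt_mul_subset (M * W.map (Int.cast : ℤ → ℝ)) W⁻¹
  have : M * W.map (Int.cast : ℤ → ℝ) * (W⁻¹).map (Int.cast : ℤ → ℝ) = M := by
    rw [Matrix.mul_assoc, show (Int.cast : ℤ → ℝ) = ⇑(Int.castRingHom ℝ) from rfl,
      ← Matrix.map_mul, Matrix.mul_nonsing_inv _ hW]
    simp
  rwa [this] at h

/-- With the parallel bases `μ·b∥ᵢ = δᵢ·a∥ᵢ`, the vectors
`d∥ᵢ = (gcd(μ,δᵢ)/δᵢ)·b∥ᵢ = (gcd(μ,δᵢ)/μ)·a∥ᵢ` form a basis of the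
DSCL `𝒟 = 𝒜 + ℬ`. -/
theorem snf_dscl_basis
    (A B : Matrix (Fin 2) (Fin 2) ℝ) (hA : IsUnit A.det) (hB : IsUnit B.det)
    (μ : ℤ) (hμ : 0 < μ) (P : Matrix (Fin 2) (Fin 2) ℤ)
    (hcop : Int.gcd μ (Int.gcd (Int.gcd (P 0 0) (P 0 1)) (Int.gcd (P 1 0) (P 1 1))) = 1)
    (hT : A⁻¹ * B = ((μ : ℝ))⁻¹ • (P.map (Int.cast : ℤ → ℝ)))
    (U V : Matrix (Fin 2) (Fin 2) ℤ) (hU : IsUnit U.det) (hV : IsUnit V.det)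
    (d : Fin 2 → ℤ) (hd : d 0 ∣ d 1)
    (hSNF : P = U * Matrix.diagonal d * V⁻¹)
    (Apar Bpar : Matrix (Fin 2) (Fin 2) ℝ)
    (hApar : Apar = A * U.map (Int.cast : ℤ → ℝ))
    (hBpar : Bpar = B * V.map (Int.cast : ℤ → ℝ))
    (hpar : ∀ i j : Fin 2, (μ : ℝ) * Bpar j i = (d i : ℝ) * Apar j i)
    (Dpar : Matrix (Fin 2) (Fin 2) ℝ)
    (hDpar : ∀ i j : Fin 2,
      Dpar j i = ((Int.gcd μ (d i) : ℝ) / (d i : ℝ)) * Bpar j i ∧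
      Dpar j i = ((Int.gcd μ (d i) : ℝ) / (μ : ℝ)) * Apar j i) :
    latt Dpar = {x | ∃ a ∈ latt A, ∃ b ∈ latt B, x = a + b} := by
  have hμR : (μ : ℝ) ≠ 0 := by exact_mod_cast hμ.ne'
  set g : Fin 2 → ℤ := fun i => (Int.gcd μ (d i) : ℤ) with hg
  have hg0 : ∀ i, (g i : ℝ) ≠ 0 := by
    intro i
    have h1 : Int.gcd μ (d i) ≠ 0 := fun h => hμ.ne' ((Int.gcd_eq_zero_iff.mp h).1)
    simp [hg]
    exact fun h => absurd h hμ.ne'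
  have hgμ : ∀ i, g i ∣ μ := fun i => Int.gcd_dvd_left _ _
  have hgd : ∀ i, g i ∣ d i := fun i => Int.gcd_dvd_right _ _
  have hBA : ∀ i j, Bpar j i = (d i : ℝ) / μ * Apar j i := by
    intro i j
    field_simp
    linarith [hpar i j]
  have hD : ∀ i j, Dpar j i = (g i : ℝ) / μ * Apar j i := by
    intro i j
    have := (hDpar i j).2
    push_cast at this ⊢
    exact this
  have hbez : ∀ i, (g i : ℝ) = μ * Int.gcdA μ (d i) + d i * Int.gcdB μ (d i) := by
    intro i
    exact_mod_cast congrArg (Int.cast : ℤ → ℝ) (Int.gcd_eq_gcd_ab μ (d i))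
  have K1 : ∀ i j, Dpar j i = (Int.gcdA μ (d i) : ℝ) * Apar j i
      + (Int.gcdB μ (d i) : ℝ) * Bpar j i := by
    intro i j
    rw [hD i j, hBA i j]
    field_simp
    linear_combination Apar j i * hbez i
  have K2 : ∀ i j, Apar j i = ((μ / g i : ℤ) : ℝ) * Dpar j i := by
    intro i j
    rw [Int.cast_div (hgμ i) (hg0 i), hD i j, ← mul_assoc, div_mul_div_comm,
      mul_comm (μ : ℝ) ((g i : ℝ)), div_self (mul_ne_zero (hg0 i) hμR), one_mul]
  have K3 : ∀ i j, Bpar j i = ((d i / g i : ℤ) : ℝ) * Dpar j i := by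
    intro i j
    rw [Int.cast_div (hgd i) (hg0 i), hD i j, hBA i j, ← mul_assoc, div_mul_div_comm,
      mul_comm ((d i : ℝ)) ((g i : ℝ)), mul_div_mul_left _ _ (hg0 i)]
  have hlatA : latt Apar = latt A := hApar ▸ latt_mul_unimodular A U hU
  have hlatB : latt Bpar = latt B := hBpar ▸ latt_mul_unimodular B V hV
  ext x
  constructor
  · rintro ⟨z, rfl⟩
    refine ⟨Apar.mulVec (fun i => ((Int.gcdA μ (d i) * z i : ℤ) : ℝ)), hlatA ▸ ⟨_, rfl⟩,
      Bpar.mulVec (fun i => ((Int.gcdB μ (d i) * z i : ℤ) : ℝ)), hlatB ▸ ⟨_, rfl⟩, ?_⟩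
    funext j
    simp only [Matrix.mulVec, dotProduct, Fin.sum_univ_two, Pi.add_apply,
      K1 0 j, K1 1 j]
    push_cast
    ring
  · rintro ⟨a, ha, b, hb, rfl⟩
    rw [← hlatA] at ha
    rw [← hlatB] at hb
    obtain ⟨za, rfl⟩ := ha
    obtain ⟨zb, rfl⟩ := hb
    refine ⟨fun i => za i * (μ / g i) + zb i * (d i / g i), ?_⟩
    funext j
    simp only [Matrix.mulVec, dotProduct, Fin.sum_univ_two, Pi.add_apply,
      K2 0 j, K2 1 j, K3 0 j, K3 1 j]
    push_cast
    ring
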